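/- Let a and b be coprime integers with b ≠ 0, let f(x) = x² + a/b over ℚ̄, and let φ(x) = b^(-1/2) x (for a fixed square root of b). Then every preperiodic point of f^φ(x) = b^(-1/2)(x² + a) is an algebraic integer. -/
import Mathlib

open Polynomial

noncomputable def Pp (a b : ℤ) : ℕ → Polynomial ℤ
  | 0 => X
  | k+1 => (Pp a b k)^2 + C (a * b^(2^k - 1))

lemma Pp_monic_deg (a b : ℤ) (k : ℕ) :
    (Pp a b k).Monic ∧ (Pp a b k).natDegree = 2^k := by
  induction k with
  | zero => exact ⟨monic_X, natDegree_X⟩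
  | succ k ih =>
    obtain ⟨hm, hd⟩ := ih
    have hsq : ((Pp a b k)^2).Monic := hm.pow 2
    have hdeg : ((Pp a b k)^2).natDegree = 2^(k+1) := by
      rw [natDegree_pow, hd]; ring
    have hlt : (C (a * b^(2^k - 1))).degree < ((Pp a b k)^2).degree := by
      apply lt_of_le_of_lt degree_C_le
      rw [degree_eq_natDegree hsq.ne_zero, hdeg]
      exact_mod_cast pow_pos (by norm_num : (0:ℕ) < 2) (k+1)
    refine ⟨hsq.add_of_left hlt, ?_⟩
    show ((Pp a b k)^2 + C (a * b^(2^k - 1))).natDegree = 2^(k+1)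
    rw [natDegree_add_C, hdeg]

lemma Pp_eval (a b : ℤ) (s α : ℂ) (hs : s^2 = (b:ℂ)) (hs0 : s ≠ 0) (k : ℕ) :
    Polynomial.aeval α (Pp a b k) =
      s^(2^k - 1) * (fun x : ℂ => (x^2 + (a : ℂ))/s)^[k] α := by
  induction k with
  | zero => simp [Pp]
  | succ k ih =>
    have h1 : 2^(k+1) - 1 = 2*(2^k - 1) + 1 := by
      have := Nat.one_le_two_pow (n := k); omega
    rw [Function.iterate_succ_apply']
    show Polynomial.aeval α ((Pp a b k)^2 + C (a * b^(2^k - 1))) = _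
    rw [map_add, map_pow, ih, aeval_C]
    simp only [algebraMap_int_eq, eq_intCast]
    have hb : ((a * b^(2^k - 1) : ℤ) : ℂ) = (a:ℂ) * (s^2)^(2^k - 1) := by
      push_cast [hs]; ring
    rw [hb, h1]
    set y := (fun x : ℂ => (x^2 + (a : ℂ))/s)^[k] α
    field_simp
    ring

theorem stmt_14 (a b : ℤ) (hb : b ≠ 0) (hab : IsCoprime a b)
    (s : ℂ) (hs : s^2 = (b : ℂ)) (α : ℂ)
    (hpre : ∃ m n : ℕ, m < n ∧
      (fun x : ℂ => (x^2 + (a : ℂ))/s)^[n] α =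
      (fun x : ℂ => (x^2 + (a : ℂ))/s)^[m] α) :
    IsIntegral ℤ α := by
  obtain ⟨m, n, hmn, heq⟩ := hpre
  have hs0 : s ≠ 0 := by
    intro h; rw [h] at hs; exact hb (by exact_mod_cast hs.symm)
  set Q : Polynomial ℤ := (Pp a b n)^2 - C (b^(2^n - 2^m)) * (Pp a b m)^2 with hQ
  obtain ⟨hmn', hdn⟩ := Pp_monic_deg a b n
  obtain ⟨hmm, hdm⟩ := Pp_monic_deg a b m
  have hsqn : ((Pp a b n)^2).Monic := hmn'.pow 2
  have hdegn : ((Pp a b n)^2).degree = ((2^(n+1) : ℕ) : WithBot ℕ) := by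
    rw [degree_eq_natDegree hsqn.ne_zero, natDegree_pow, hdn]
    norm_cast; ring
  have hlt : (C (b^(2^n - 2^m)) * (Pp a b m)^2).degree < ((Pp a b n)^2).degree := by
    rw [degree_C_mul (pow_ne_zero _ hb), degree_eq_natDegree (hmm.pow 2).ne_zero,
      natDegree_pow, hdm, hdegn]
    norm_cast
    calc 2 * 2^m = 2^(m+1) := by ring
    _ < 2^(n+1) := Nat.pow_lt_pow_right (by norm_num) (by omega)
  have hQm : Q.Monic := by
    rw [hQ, sub_eq_add_neg]
    exact hsqn.add_of_left (by rwa [degree_neg])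
  refine ⟨Q, hQm, ?_⟩
  rw [← aeval_def, hQ]
  simp only [map_sub, map_mul, map_pow, aeval_C, algebraMap_int_eq, eq_intCast, map_intCast,
    Pp_eval a b s α hs hs0 n, Pp_eval a b s α hs hs0 m, heq]
  have hcast : ((b : ℤ) : ℂ) = s^2 := hs.symm
  rw [hcast]
  set y := (fun x : ℂ => (x^2 + (a : ℂ))/s)^[m] α
  have hexp : 2*(2^n - 1) = 2*(2^n - 2^m) + 2*(2^m - 1) := by
    have h1 := Nat.one_le_two_pow (n := m)
    have h2 : 2^m ≤ 2^n := Nat.pow_le_pow_right (by norm_num) hmn.le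
    omega
  rw [mul_pow, mul_pow, ← pow_mul, ← pow_mul, ← pow_mul, ← mul_assoc, ← pow_add]
  have hexp2 : (2^n - 1) * 2 = 2*(2^n - 2^m) + (2^m - 1) * 2 := by omega
  rw [hexp2, sub_self]
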